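/- Let (G,H,K) be a loop folder (K is a transversal to every conjugate of H in G, and 1 ∈ K) and let U be a subgroup of G. Then U gives rise to a subfolder (U, U ∩ H, U ∩ K) if and only if U = (U ∩ H)(U ∩ K); in that case U ∩ K is a transversal to every conjugate in U of U ∩ H. -/
import Mathlib


open scoped Pointwise

/-- `(U, V, W)` is a loop folder inside the ambient group `G`: `V ≤ U`, `W ⊆ U`,
`W` is a transversal to every `U`-conjugate of `V` in `U`, and `1 ∈ W`. -/
def IsLoopFolderIn {G : Type*} [Group G] (U V : Subgroup G) (W : Set G) : Prop :=
  V ≤ U ∧ W ⊆ (U : Set G) ∧ (1 : G) ∈ W ∧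
    ∀ u ∈ U, ∀ g ∈ U, ∃! k, k ∈ W ∧ ∃ h ∈ V, g = u⁻¹ * h * u * k

/-- Let `(G,H,K)` be a loop folder and `U ≤ G`. Then `U` gives rise
to a subfolder `(U, V, W)` (with `V ≤ U ∩ H` and `W ⊆ U ∩ K`) if and only if
`U = (U ∩ H)(U ∩ K)`; in that case one may take `V = U ∩ H` and `W = U ∩ K`,
i.e. `(U, U ∩ H, U ∩ K)` is a loop folder. -/
theorem subfolder_iff_factorization {G : Type*} [Group G] [Finite G]
    (H : Subgroup G) (K : Set G)
    (hfolder : IsLoopFolderIn (⊤ : Subgroup G) H K)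
    (U : Subgroup G) :
    ((∃ (V : Subgroup G) (W : Set G),
        V ≤ U ⊓ H ∧ W ⊆ (U : Set G) ∩ K ∧ IsLoopFolderIn U V W) ↔
      (U : Set G) = ((U : Set G) ∩ (H : Set G)) * ((U : Set G) ∩ K)) ∧
    ((U : Set G) = ((U : Set G) ∩ (H : Set G)) * ((U : Set G) ∩ K) →
      IsLoopFolderIn U (U ⊓ H) ((U : Set G) ∩ K)) := by
  obtain ⟨-, -, h1K, huniq⟩ := hfolder
  have key : ∀ u g : G, ∃! k, k ∈ K ∧ ∃ h ∈ H, g = u⁻¹ * h * u * k :=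
    fun u g => huniq u trivial g trivial
  set A : Set G := (U : Set G) ∩ (H : Set G) with hA
  set B : Set G := (U : Set G) ∩ K with hB
  -- the family of maps
  have hmem : ∀ u ∈ U, ∀ (a : A) (b : B), u⁻¹ * (a : G) * u * (b : G) ∈ U := by
    rintro u hu ⟨a, haU, haH⟩ ⟨b, hbU, hbK⟩
    exact U.mul_mem (U.mul_mem (U.mul_mem (U.inv_mem hu) haU) hu) hbU
  -- injectivity for every u
  have hinj : ∀ u : G, Function.Injective
      (fun p : A × B => u⁻¹ * (p.1 : G) * u * (p.2 : G)) := by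
    intro u p q hpq
    obtain ⟨⟨a, haU, haH⟩, ⟨b, hbU, hbK⟩⟩ := p
    obtain ⟨⟨a', haU', haH'⟩, ⟨b', hbU', hbK'⟩⟩ := q
    simp only at hpq
    obtain ⟨k₀, -, hk₀⟩ := key u (u⁻¹ * a * u * b)
    have hb : b = k₀ := hk₀ b ⟨hbK, a, haH, rfl⟩
    have hb' : b' = k₀ := hk₀ b' ⟨hbK', a', haH', hpq⟩
    have hbb : b = b' := hb.trans hb'.symm
    have haa : a = a' := by
      have := hpq
      rw [← hbb] at this
      have h2 : u⁻¹ * a * u = u⁻¹ * a' * u := mul_right_cancel this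
      rw [mul_assoc, mul_assoc] at h2
      have h3 : (a : G) * u = a' * u := mul_left_cancel h2
      exact mul_right_cancel h3
    simp [haa, hbb]
  -- main construction
  have main : (U : Set G) = A * B → IsLoopFolderIn U (U ⊓ H) B := by
    intro hfact
    refine ⟨inf_le_left, Set.inter_subset_left, ⟨U.one_mem, h1K⟩, ?_⟩
    -- bijectivity at u = 1
    have f1 : ∀ p : A × B, ((p.1 : G) * (p.2 : G)) ∈ U := by
      rintro ⟨⟨a, haU, haH⟩, ⟨b, hbU, hbK⟩⟩
      exact U.mul_mem haU hbU
    have hbij1 : Function.Bijective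
        (fun p : A × B => (⟨(p.1 : G) * (p.2 : G), f1 p⟩ : (U : Set G))) := by
      constructor
      · intro p q hpq
        apply hinj 1
        have := congrArg Subtype.val hpq
        simpa using this
      · rintro ⟨g, hg⟩
        have : g ∈ A * B := hfact ▸ hg
        obtain ⟨a, ha, b, hb, hab⟩ := this
        exact ⟨(⟨⟨a, ha⟩, ⟨b, hb⟩⟩ : A × B), Subtype.ext hab⟩
    have hcard : Nat.card (A × B : Type _) = Nat.card (U : Set G) :=
      Nat.card_eq_of_bijective _ hbij1
    intro u hu g hg
    -- bijectivity at general u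
    have hbiju : Function.Bijective
        (fun p : A × B => (⟨u⁻¹ * (p.1 : G) * u * (p.2 : G), hmem u hu p.1 p.2⟩ :
          (U : Set G))) := by
      rw [Nat.bijective_iff_injective_and_card]
      refine ⟨?_, hcard⟩
      intro p q hpq
      apply hinj u
      exact congrArg Subtype.val hpq
    obtain ⟨⟨⟨a, haU, haH⟩, ⟨b, hbU, hbK⟩⟩, hab⟩ := hbiju.2 ⟨g, hg⟩
    have hab' : u⁻¹ * a * u * b = g := congrArg Subtype.val hab
    refine ⟨b, ⟨⟨hbU, hbK⟩, a, Subgroup.mem_inf.mpr ⟨haU, haH⟩, hab'.symm⟩, ?_⟩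
    rintro k' ⟨⟨hk'U, hk'K⟩, h', hh', hgk'⟩
    obtain ⟨k₀, -, hk₀⟩ := key u g
    have h1 : k' = k₀ := hk₀ k' ⟨hk'K, h', (Subgroup.mem_inf.mp hh').2, hgk'⟩
    have h2 : b = k₀ := hk₀ b ⟨hbK, a, haH, hab'.symm⟩
    exact h1.trans h2.symm
  refine ⟨⟨?_, fun hfact => ⟨U ⊓ H, B, le_rfl, subset_rfl, main hfact⟩⟩, main⟩
  rintro ⟨V, W, hV, hW, hVU, hWU, h1W, hUniq⟩
  apply Set.Subset.antisymm
  · intro g hg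
    obtain ⟨k, ⟨hkW, h, hhV, hgk⟩, -⟩ := hUniq 1 U.one_mem g hg
    have hgk' : g = h * k := by simpa using hgk
    have hhUH : h ∈ A := by
      have := Subgroup.mem_inf.mp (hV hhV)
      exact ⟨this.1, this.2⟩
    exact hgk' ▸ Set.mul_mem_mul hhUH (hW hkW)
  · rintro g ⟨a, ⟨haU, -⟩, b, ⟨hbU, -⟩, rfl⟩
    exact U.mul_mem haU hbU
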